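/- Let Â = A + εB be a dual real n×n matrix with index of A equal to m, such that the dual core-EP inverse exists and equals A^⊕ − ε A^⊕ B A^⊕. Then R(Â^m) ∩ N((Â^m)^T) = {0}, i.e., the only dual vector lying both in the dual range of Â^m and in the dual null space of the transpose of Â^m is the zero dual vector. -/
import Mathlib


open Matrix

abbrev Mat (n : ℕ) := Matrix (Fin n) (Fin n) ℝ

/-- A dual matrix `A + ε B` represented as the pair `(A, B)`. -/
abbrev DM (n : ℕ) := Mat n × Mat n

/-- Dual matrix multiplication: `(A+εB)(C+εD) = AC + ε(AD+BC)`. -/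
def dmul {n : ℕ} (X Y : DM n) : DM n := (X.1 * Y.1, X.1 * Y.2 + X.2 * Y.1)

/-- Componentwise transpose of a dual matrix. -/
def dT {n : ℕ} (X : DM n) : DM n := (X.1ᵀ, X.2ᵀ)

/-- Powers of a dual matrix. -/
def dpow {n : ℕ} (X : DM n) : ℕ → DM n
  | 0 => (1, 0)
  | k+1 => dmul X (dpow X k)

/-- `m` is the index of `A`: the least `m` with `rank (A^(m+1)) = rank (A^m)`. -/
def MatIndex {n : ℕ} (A : Mat n) (m : ℕ) : Prop :=
  (A ^ (m+1)).rank = (A ^ m).rank ∧ ∀ k < m, (A ^ (k+1)).rank ≠ (A ^ k).rank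

/-- `X` is the core-EP inverse of `A` (with `m` the index of `A`). -/
def IsCEP {n : ℕ} (m : ℕ) (A X : Mat n) : Prop :=
  (A * X)ᵀ = A * X ∧ A * (X * X) = X ∧ X * A ^ (m+1) = A ^ m

/-- `Xh` is a dual core-EP inverse of the dual matrix `Ah`. -/
def IsDualCEP {n : ℕ} (m : ℕ) (Ah Xh : DM n) : Prop :=
  dT (dmul Ah Xh) = dmul Ah Xh ∧ dmul Ah (dmul Xh Xh) = Xh ∧
    dmul Xh (dpow Ah (m+1)) = dpow Ah m

/-- A dual vector `x + ε x₀` represented as the pair `(x, x₀)`. -/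
abbrev DV (n : ℕ) := (Fin n → ℝ) × (Fin n → ℝ)

/-- Action of a dual matrix on a dual vector. -/
def dmulVec {n : ℕ} (M : DM n) (x : DV n) : DV n :=
  (M.1.mulVec x.1, M.1.mulVec x.2 + M.2.mulVec x.1)

/-- Dual range of a dual matrix. -/
def DRange {n : ℕ} (M : DM n) : Set (DV n) :=
  {y | ∃ z w : Fin n → ℝ, y = (M.1.mulVec z, M.1.mulVec w + M.2.mulVec z)}

/-- Dual null space of a dual matrix. -/
def DNull {n : ℕ} (M : DM n) : Set (DV n) :=
  {y | M.1.mulVec y.1 = 0 ∧ M.1.mulVec y.2 + M.2.mulVec y.1 = 0}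

lemma dpow_fst {n : ℕ} (A B : Mat n) (k : ℕ) : (dpow (A, B) k).1 = A ^ k := by
  induction k with
  | zero => simp [dpow]
  | succ k ih => simp [dpow, dmul, ih, pow_succ']

lemma Ac_pow {n : ℕ} (A Ac : Mat n) (h2 : A * (Ac * Ac) = Ac) :
    ∀ k, A ^ k * Ac ^ (k + 1) = Ac := by
  intro k
  induction k with
  | zero => simp
  | succ k ih =>
    have e : A ^ (k + 1) * Ac ^ (k + 2) = A ^ k * (A * (Ac * Ac) * Ac ^ k) := by
      rw [pow_succ A k, show Ac ^ (k + 2) = Ac * (Ac * Ac ^ k) from by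
        rw [pow_succ', pow_succ']]
      simp [mul_assoc]
    rw [e, h2, show A ^ k * (Ac * Ac ^ k) = A ^ k * Ac ^ (k + 1) from by
      rw [pow_succ']]
    exact ih

lemma cep_key {n m : ℕ} (A Ac : Mat n)
    (h1 : (A * Ac)ᵀ = A * Ac) (h2 : A * (Ac * Ac) = Ac) :
    ∀ u : Fin n → ℝ, (A * Ac).mulVec u = u → (A ^ m)ᵀ.mulVec u = 0 → u = 0 := by
  intro u hu hz
  have hAAc : A * Ac = A ^ (m + 1) * Ac ^ (m + 1) := by
    conv_lhs => rw [← Ac_pow A Ac h2 m]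
    rw [← mul_assoc, ← pow_succ']
  calc u = (A * Ac).mulVec u := hu.symm
    _ = (A * Ac)ᵀ.mulVec u := by rw [h1]
    _ = (Ac ^ (m + 1))ᵀ.mulVec (Aᵀ.mulVec ((A ^ m)ᵀ.mulVec u)) := by
        rw [hAAc, transpose_mul, pow_succ A m, transpose_mul,
          Matrix.mulVec_mulVec, Matrix.mulVec_mulVec, ← mul_assoc]
    _ = 0 := by rw [hz, Matrix.mulVec_zero, Matrix.mulVec_zero]

theorem stmt15 {n m : ℕ} (A B : Mat n) (hm : MatIndex A m)
    (Ac : Mat n) (hAc : IsCEP m A Ac)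
    (hXh : IsDualCEP m (A, B) (Ac, -(Ac * B * Ac))) :
    DRange (dpow (A, B) m) ∩ DNull (dT (dpow (A, B) m)) = {0} := by
  obtain ⟨h1, h2, h3⟩ := hAc
  set S : Mat n := (dpow (A, B) m).2 with hSdef
  have hS1 : (dpow (A, B) m).1 = A ^ m := dpow_fst A B m
  -- second component of the third dual core-EP condition
  have hdual := congrArg Prod.snd hXh.2.2
  have hd2 : Ac * (A * S + B * A ^ m) + -(Ac * B * Ac) * (A * A ^ m) = S := by
    have e1 : dpow (A, B) (m + 1) = dmul (A, B) (dpow (A, B) m) := rfl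
    simpa [e1, dmul, hS1] using hdual
  -- A * Ac fixes A ^ m
  have hfixpow : A * Ac * A ^ m = A ^ m := by
    calc A * Ac * A ^ m = A * Ac * (Ac * A ^ (m + 1)) := by rw [h3]
      _ = A * (Ac * Ac) * A ^ (m + 1) := by simp [mul_assoc]
      _ = Ac * A ^ (m + 1) := by rw [h2]
      _ = A ^ m := h3
  have key := cep_key (m := m) A Ac h1 h2
  ext x
  simp only [Set.mem_inter_iff, Set.mem_singleton_iff]
  constructor
  · rintro ⟨⟨z, w, hx⟩, hnull⟩
    rw [hS1] at hx
    obtain ⟨hn1, hn2⟩ := hnull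
    simp only [dT, hS1] at hn1 hn2
    -- first component is zero
    have hx1 : x.1 = (A ^ m).mulVec z := by rw [hx]
    have hx1fix : (A * Ac).mulVec x.1 = x.1 := by
      rw [hx1, Matrix.mulVec_mulVec, hfixpow]
    have hz1 : x.1 = 0 := key x.1 hx1fix hn1
    -- hence A^m z = 0
    have hAmz : (A ^ m).mulVec z = 0 := hx1.symm.trans hz1
    -- second component
    have hn2' : (A ^ m)ᵀ.mulVec x.2 = 0 := by
      have := hn2
      rw [hz1, Matrix.mulVec_zero, add_zero] at this
      exact this
    have hx2 : x.2 = (A ^ m).mulVec w + S.mulVec z := by rw [hx]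
    -- S z is fixed by Ac * A
    have hSz : Ac.mulVec (A.mulVec (S.mulVec z)) = S.mulVec z := by
      have hth : Ac.mulVec ((A * S + B * A ^ m).mulVec z)
          + (-(Ac * B * Ac)).mulVec ((A * A ^ m).mulVec z) = S.mulVec z := by
        rw [Matrix.mulVec_mulVec, Matrix.mulVec_mulVec, ← Matrix.add_mulVec, hd2]
      have e1 : (A * A ^ m).mulVec z = 0 := by
        rw [← Matrix.mulVec_mulVec, hAmz, Matrix.mulVec_zero]
      have e2 : (A * S + B * A ^ m).mulVec z = A.mulVec (S.mulVec z) := by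
        rw [Matrix.add_mulVec, ← Matrix.mulVec_mulVec, ← Matrix.mulVec_mulVec,
          hAmz, Matrix.mulVec_zero, add_zero]
      rw [e1, e2, Matrix.mulVec_zero, add_zero] at hth
      exact hth
    have hSzfix : (A * Ac).mulVec (S.mulVec z) = S.mulVec z := by
      conv_lhs => rw [← hSz]
      rw [Matrix.mulVec_mulVec, mul_assoc, h2]
      exact hSz
    have hx2fix : (A * Ac).mulVec x.2 = x.2 := by
      rw [hx2, Matrix.mulVec_add, Matrix.mulVec_mulVec, hfixpow, hSzfix]
    have hz2 : x.2 = 0 := key x.2 hx2fix hn2'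
    exact Prod.ext hz1 hz2
  · rintro rfl
    refine ⟨⟨0, 0, ?_⟩, ?_, ?_⟩ <;>
      simp [dT, Matrix.mulVec_zero, Prod.ext_iff]
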